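/- Let U be monotone submodular with U(∅) = 0 on a finite ground set F, and let the greedy sequence G_i be as in the standard greedy algorithm. Then for each step i, U(G_{i+1}) - U(G_i) ≥ (OPT - U(G_i))/m, where OPT = max{U(A) : |A| ≤ m}. -/

import Mathlib

theorem greedy_step_inequality {F : Type*} [Fintype F] [Nonempty F] [DecidableEq F]
    (U : Finset F → ℝ)
    (mono : ∀ A B : Finset F, A ⊆ B → U A ≤ U B)
    (submod : ∀ A B : Finset F, A ⊆ B → ∀ s : F,
      U (insert s A) - U A ≥ U (insert s B) - U B)
    (hempty : U ∅ = 0)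
    (m : ℕ) (hm : 1 ≤ m)
    (G : ℕ → Finset F) (hG0 : G 0 = ∅)
    (hGstep : ∀ i : ℕ, ∃ g : F, G (i + 1) = insert g (G i) ∧
      ∀ g' : F, U (insert g' (G i)) - U (G i) ≤ U (insert g (G i)) - U (G i)) :
    ∀ i : ℕ, ∀ A : Finset F, A.card ≤ m →
      (U A - U (G i)) / (m : ℝ) ≤ U (G (i + 1)) - U (G i) := by
  -- telescoping lemma
  have key : ∀ A B : Finset F,
      U (A ∪ B) - U B ≤ ∑ a ∈ A \ B, (U (insert a B) - U B) := by
    intro A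
    induction A using Finset.induction_on with
    | empty => intro B; simp
    | insert _ _ ha ih =>
      rename_i a A
      intro B
      by_cases hab : a ∈ B
      · have h1 : insert a A ∪ B = A ∪ B := by
          rw [Finset.insert_union, Finset.insert_eq_self.mpr (Finset.mem_union_right _ hab)]
        have h2 : insert a A \ B = A \ B := by
          rw [Finset.insert_sdiff_of_mem _ hab]
        rw [h1, h2]; exact ih B
      · have h1 : insert a A ∪ B = insert a (A ∪ B) := by
          rw [Finset.insert_union]
        have h2 : insert a A \ B = insert a (A \ B) := by
          rw [Finset.insert_sdiff_of_notMem _ hab]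
        have hna : a ∉ A \ B := fun h => ha (Finset.mem_sdiff.mp h).1
        rw [h1, h2, Finset.sum_insert hna]
        have hsub : U (insert a (A ∪ B)) - U (A ∪ B) ≤ U (insert a B) - U B :=
          submod B (A ∪ B) Finset.subset_union_right a
        have := ih B
        linarith
  intro i A hA
  obtain ⟨g, hg, hgmax⟩ := hGstep i
  set B := G i
  set d := U (insert g B) - U B with hd
  have hd0 : 0 ≤ d := by
    obtain ⟨x⟩ := (inferInstance : Nonempty F)
    have h1 : U B ≤ U (insert x B) := mono _ _ (Finset.subset_insert _ _)
    have h2 := hgmax x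
    linarith
  have hsum : ∑ a ∈ A \ B, (U (insert a B) - U B) ≤ (A \ B).card • d := by
    apply Finset.sum_le_card_nsmul
    intro a _
    exact hgmax a
  have hcard : ((A \ B).card : ℝ) ≤ (m : ℝ) := by
    exact_mod_cast le_trans (Finset.card_le_card (Finset.sdiff_subset)) hA
  have hUA : U A ≤ U (A ∪ B) := mono _ _ Finset.subset_union_left
  have hkey := key A B
  have hm0 : (0:ℝ) < m := by exact_mod_cast hm
  rw [div_le_iff₀ hm0, hg]
  have : ((A \ B).card : ℝ) * d ≤ (m : ℝ) * d := mul_le_mul_of_nonneg_right hcard hd0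
  rw [nsmul_eq_mul] at hsum
  calc U A - U B ≤ U (A ∪ B) - U B := by linarith
    _ ≤ ((A \ B).card : ℝ) * d := by linarith
    _ ≤ (m : ℝ) * d := this
    _ = (U (insert g B) - U B) * m := by rw [hd]; ring
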